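/- Let k̃, k, n, ñ ∈ ℕ with k̃ ≤ k < n ≤ ñ, and suppose there exists an impartial and α̃-optimal (ñ, k̃)-selection mechanism. Then there exists an impartial and α-optimal (n, k)-selection mechanism with α = (k̃/k)·α̃. -/

import Mathlib

open Finset

/-- A valid weight matrix: nonnegative entries and zero diagonal. -/
def IsValidMatrix {n : ℕ} (A : Matrix (Fin n) (Fin n) ℝ) : Prop :=
  (∀ i j, 0 ≤ A i j) ∧ ∀ i, A i i = 0

/-- Score of a subset `S` of agents: total weight of votes received by members of `S`. -/
def score {n : ℕ} (A : Matrix (Fin n) (Fin n) ℝ) (S : Finset (Fin n)) : ℝ :=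
  ∑ i : Fin n, ∑ j ∈ S, A i j

/-- The maximum score over all subsets of cardinality `k`. -/
noncomputable def optScore {n : ℕ} (k : ℕ) (A : Matrix (Fin n) (Fin n) ℝ) : ℝ :=
  sSup {x : ℝ | ∃ S : Finset (Fin n), S.card = k ∧ score A S = x}

/-- Impartiality: an agent cannot influence its own selection. -/
def Impartial {n : ℕ} (f : Matrix (Fin n) (Fin n) ℝ → Finset (Fin n)) : Prop :=
  ∀ A A' : Matrix (Fin n) (Fin n) ℝ, IsValidMatrix A → IsValidMatrix A' →
    ∀ i : Fin n, (∀ i', i' ≠ i → A i' = A' i') → (i ∈ f A ↔ i ∈ f A')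

/-- `α`-optimality of an `(n,k)`-selection mechanism. -/
def AlphaOptimal {n : ℕ} (k : ℕ) (f : Matrix (Fin n) (Fin n) ℝ → Finset (Fin n))
    (α : ℝ) : Prop :=
  ∀ A : Matrix (Fin n) (Fin n) ℝ, IsValidMatrix A → α * optScore k A ≤ score A (f A)


lemma score_nonneg {n : ℕ} {A : Matrix (Fin n) (Fin n) ℝ}
    (hA : (∀ i j, 0 ≤ A i j)) (S : Finset (Fin n)) :
    0 ≤ ∑ i : Fin n, ∑ j ∈ S, A i j :=
  Finset.sum_nonneg fun i _ => Finset.sum_nonneg fun j _ => hA i j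

-- counting: number of m-subsets of S containing j
lemma filter_powersetCard {ι : Type*} [DecidableEq ι] (S : Finset ι) (j : ι) (hj : j ∈ S) (m : ℕ) :
    (S.powersetCard (m+1)).filter (fun T => j ∈ T)
      = ((S.erase j).powersetCard m).image (insert j) := by
  ext T
  simp only [mem_filter, mem_powersetCard, mem_image]
  constructor
  · rintro ⟨⟨hTS, hcard⟩, hjT⟩
    refine ⟨T.erase j, ⟨erase_subset_erase j hTS, ?_⟩, insert_erase hjT⟩
    rw [card_erase_of_mem hjT, hcard]; rfl
  · rintro ⟨T', ⟨hT'S, hc⟩, rfl⟩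
    have hjT' : j ∉ T' := fun h => (notMem_erase j S) (hT'S h)
    exact ⟨⟨insert_subset hj (hT'S.trans (erase_subset j S)), by
      rw [card_insert_of_notMem hjT', hc]⟩, mem_insert_self j T'⟩

lemma card_filter_powersetCard {ι : Type*} [DecidableEq ι] (S : Finset ι) (j : ι) (hj : j ∈ S)
    (m : ℕ) :
    ((S.powersetCard (m+1)).filter (fun T => j ∈ T)).card = (S.card - 1).choose m := by
  rw [filter_powersetCard S j hj m, card_image_of_injOn, card_powersetCard,
    card_erase_of_mem hj]
  intro T1 h1 T2 h2 h
  have h1' : j ∉ T1 := fun hc => notMem_erase j S ((mem_powersetCard.1 h1).1 hc)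
  have h2' : j ∉ T2 := fun hc => notMem_erase j S ((mem_powersetCard.1 h2).1 hc)
  rw [← erase_insert h1', ← erase_insert h2', h]

lemma sum_powersetCard_sum {ι : Type*} [DecidableEq ι] (S : Finset ι) (m : ℕ) (c : ι → ℝ) :
    ∑ T ∈ S.powersetCard (m+1), ∑ j ∈ T, c j
      = ((S.card - 1).choose m : ℝ) * ∑ j ∈ S, c j := by
  have step1 : ∀ T ∈ S.powersetCard (m+1), ∑ j ∈ T, c j = ∑ j ∈ S, if j ∈ T then c j else 0 := by
    intro T hT
    rw [sum_ite_mem, (inter_eq_right.2 (mem_powersetCard.1 hT).1)]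
  rw [sum_congr rfl step1, sum_comm]
  rw [mul_comm, sum_mul]
  refine sum_congr rfl fun j hj => ?_
  rw [← sum_filter, sum_const, card_filter_powersetCard S j hj m, nsmul_eq_mul, mul_comm]

lemma avg_subset {n k m : ℕ} (A : Matrix (Fin n) (Fin n) ℝ) (hA : ∀ i j, 0 ≤ A i j)
    (S : Finset (Fin n)) (hS : S.card = k) (hm : m ≤ k) :
    ∃ T ⊆ S, T.card = m ∧
      ((m : ℝ) / (k : ℝ)) * (∑ i : Fin n, ∑ j ∈ S, A i j) ≤ ∑ i : Fin n, ∑ j ∈ T, A i j := by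
  rcases Nat.eq_zero_or_pos m with rfl | hm1
  · refine ⟨∅, empty_subset S, card_empty, ?_⟩
    rcases Nat.eq_zero_or_pos k with rfl | hk
    · simp [score_nonneg hA]
    · simp [score_nonneg hA]
  have hk : 0 < k := lt_of_lt_of_le hm1 hm
  set c : Fin n → ℝ := fun j => ∑ i, A i j with hc
  have hscore : ∀ T : Finset (Fin n), ∑ i : Fin n, ∑ j ∈ T, A i j = ∑ j ∈ T, c j :=
    fun T => Finset.sum_comm
  obtain ⟨m', rfl⟩ : ∃ m', m = m' + 1 := ⟨m - 1, (Nat.succ_pred_eq_of_pos hm1).symm⟩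
  have hne : (S.powersetCard (m'+1)).Nonempty := powersetCard_nonempty.2 (hS ▸ hm)
  have hsum : ∑ T ∈ S.powersetCard (m'+1), ((m'+1 : ℝ) / (k : ℝ)) * (∑ j ∈ S, c j)
      ≤ ∑ T ∈ S.powersetCard (m'+1), ∑ j ∈ T, c j := by
    rw [sum_powersetCard_sum, sum_const, card_powersetCard, hS, nsmul_eq_mul]
    have hnat : (m'+1) * k.choose (m'+1) = k * (k-1).choose m' := by
      obtain ⟨k', rfl⟩ : ∃ k', k = k' + 1 := ⟨k - 1, (Nat.succ_pred_eq_of_pos hk).symm⟩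
      simpa [mul_comm] using (Nat.add_one_mul_choose_eq k' m').symm
    have hreal : ((m':ℝ)+1) * (k.choose (m'+1) : ℝ) = (k:ℝ) * ((k-1).choose m' : ℝ) := by
      exact_mod_cast congrArg (Nat.cast (R := ℝ)) hnat
    have hid : ((m' : ℝ) + 1) / (k : ℝ) * (k.choose (m'+1) : ℝ) = ((k-1).choose m' : ℝ) := by
      field_simp
      linarith [hreal]
    rw [mul_comm ((k.choose (m'+1) : ℝ)), mul_assoc, mul_comm (∑ j ∈ S, c j), ← mul_assoc, hid]
  obtain ⟨T, hT, hle⟩ := Finset.exists_le_of_sum_le hne hsum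
  rw [mem_powersetCard] at hT
  push_cast at hle ⊢
  exact ⟨T, hT.1, hT.2, by rw [hscore S, hscore T]; exact hle⟩

variable {n ntil : ℕ}

def padM (h : n ≤ ntil) (A : Matrix (Fin n) (Fin n) ℝ) : Matrix (Fin ntil) (Fin ntil) ℝ :=
  fun i j => if hi : (i : ℕ) < n then if hj : (j : ℕ) < n then A ⟨i, hi⟩ ⟨j, hj⟩ else 0 else 0

def pullS (h : n ≤ ntil) (S' : Finset (Fin ntil)) : Finset (Fin n) :=
  univ.filter (fun j => Fin.castLE h j ∈ S')

lemma padM_castLE (h : n ≤ ntil) (A : Matrix (Fin n) (Fin n) ℝ) (i j : Fin n) :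
    padM h A (Fin.castLE h i) (Fin.castLE h j) = A i j := by
  simp [padM, i.isLt, j.isLt]

lemma padM_valid (h : n ≤ ntil) {A : Matrix (Fin n) (Fin n) ℝ} (hA : IsValidMatrix A) :
    IsValidMatrix (padM h A) := by
  constructor
  · intro i j
    unfold padM
    split_ifs with h1 h2
    · exact hA.1 _ _
    · exact le_refl 0
    · exact le_refl 0
  · intro i
    unfold padM
    split_ifs with h1
    · exact hA.2 _
    · rfl

lemma sum_castLE (h : n ≤ ntil) (f : Fin ntil → ℝ) (hf : ∀ j : Fin ntil, ¬ ((j : ℕ) < n) → f j = 0) :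
    ∑ j : Fin ntil, f j = ∑ j : Fin n, f (Fin.castLE h j) := by
  have hmap : ∑ j : Fin n, f (Fin.castLE h j) = ∑ j ∈ univ.map (Fin.castLEEmb h), f j := by
    rw [Finset.sum_map]; simp [Fin.castLEEmb_apply]
  rw [hmap]
  refine (Finset.sum_subset (subset_univ _) fun j _ hj => ?_).symm
  refine hf j fun hjn => hj ?_
  simp only [mem_map, Fin.castLEEmb_apply, mem_univ, true_and]
  exact ⟨⟨j, hjn⟩, rfl⟩

lemma sum_pull (h : n ≤ ntil) (S' : Finset (Fin ntil)) (f : Fin ntil → ℝ)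
    (hf : ∀ j : Fin ntil, ¬ ((j : ℕ) < n) → f j = 0) :
    ∑ j ∈ S', f j = ∑ j ∈ pullS h S', f (Fin.castLE h j) := by
  have hmap : ∑ j ∈ pullS h S', f (Fin.castLE h j)
      = ∑ j ∈ (pullS h S').map (Fin.castLEEmb h), f j := by
    rw [Finset.sum_map]; simp [Fin.castLEEmb_apply]
  rw [hmap]
  refine (Finset.sum_subset ?_ fun j hjS hj => ?_).symm
  · intro j hj
    simp only [mem_map, Fin.castLEEmb_apply] at hj
    obtain ⟨j', hj', rfl⟩ := hj
    simpa [pullS] using hj'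
  · by_cases hjn : (j : ℕ) < n
    · exfalso
      apply hj
      simp only [mem_map, Fin.castLEEmb_apply]
      refine ⟨⟨j, hjn⟩, ?_, ?_⟩
      · have hcj : Fin.castLE h ⟨(j : ℕ), hjn⟩ = j := Fin.ext rfl
        simp [pullS, hcj, hjS]
      · exact Fin.ext rfl
    · exact hf j hjn

lemma score_padM (h : n ≤ ntil) (A : Matrix (Fin n) (Fin n) ℝ) (S' : Finset (Fin ntil)) :
    score (padM h A) S' = score A (pullS h S') := by
  unfold score
  refine Eq.trans Finset.sum_comm ?_
  have hzero : ∀ j : Fin ntil, ¬ ((j : ℕ) < n) → ∑ i : Fin ntil, padM h A i j = 0 := by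
    intro j hj
    refine Finset.sum_eq_zero fun i _ => ?_
    simp [padM, hj]
  rw [sum_pull h S' _ hzero]
  refine Eq.trans (Finset.sum_congr rfl fun j _ => ?_) Finset.sum_comm
  rw [sum_castLE h _ (fun i hi => by simp [padM, hi])]
  exact Finset.sum_congr rfl fun i _ => padM_castLE h A i j

lemma pull_map (h : n ≤ ntil) (T : Finset (Fin n)) :
    pullS h (T.map (Fin.castLEEmb h)) = T := by
  ext j
  simp [pullS, Fin.castLE_inj]

lemma card_pull_le (h : n ≤ ntil) (S' : Finset (Fin ntil)) :
    (pullS h S').card ≤ S'.card := by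
  rw [← Finset.card_map (Fin.castLEEmb h)]
  refine Finset.card_le_card fun j hj => ?_
  simp only [mem_map, Fin.castLEEmb_apply] at hj
  obtain ⟨j', hj', rfl⟩ := hj
  simpa [pullS] using hj'

/-- Generalization lemma: an impartial `α̃`-optimal `(ñ,k̃)`-selection mechanism with
`k̃ ≤ k < n ≤ ñ` yields an impartial `(k̃/k)·α̃`-optimal `(n,k)`-selection mechanism. -/
theorem stmt8 (ktil k n ntil : ℕ) (h1 : ktil ≤ k) (h2 : k < n) (h3 : n ≤ ntil)
    (αtil : ℝ)
    (hex : ∃ g : Matrix (Fin ntil) (Fin ntil) ℝ → Finset (Fin ntil),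
      (∀ A, (g A).card ≤ ktil) ∧ Impartial g ∧ AlphaOptimal ktil g αtil) :
    ∃ f : Matrix (Fin n) (Fin n) ℝ → Finset (Fin n),
      (∀ A, (f A).card ≤ k) ∧ Impartial f ∧
      AlphaOptimal k f (((ktil : ℝ) / (k : ℝ)) * αtil) := by
  obtain ⟨g, hgcard, hgimp, hgopt⟩ := hex
  refine ⟨fun A => pullS h3 (g (padM h3 A)), ?_, ?_, ?_⟩
  · intro A
    exact le_trans (card_pull_le h3 _) (le_trans (hgcard _) h1)
  · intro A A' hA hA' i hrows
    have hpadrows : ∀ i' : Fin ntil, i' ≠ Fin.castLE h3 i → padM h3 A i' = padM h3 A' i' := by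
      intro i' hi'
      funext j
      unfold padM
      split_ifs with hi'' hj''
      · have hne : (⟨(i' : ℕ), hi''⟩ : Fin n) ≠ i := by
          intro hc; apply hi'; rw [← hc]; exact Fin.ext rfl
        rw [hrows _ hne]
      · rfl
      · rfl
    have hiff := hgimp (padM h3 A) (padM h3 A') (padM_valid h3 hA) (padM_valid h3 hA')
      (Fin.castLE h3 i) hpadrows
    simpa [pullS] using hiff
  · intro A hA
    set Atil := padM h3 A with hAtil
    have hAtilv : IsValidMatrix Atil := padM_valid h3 hA
    have hsc : score A (pullS h3 (g Atil)) = score Atil (g Atil) := (score_padM h3 A _).symm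
    have hscore_nonneg : 0 ≤ score A (pullS h3 (g Atil)) := score_nonneg hA.1 _
    -- nonnegativity of optScore k A
    have hbdd1 : BddAbove {x : ℝ | ∃ S : Finset (Fin n), S.card = k ∧ score A S = x} := by
      refine BddAbove.mono ?_ (Set.finite_range (score A)).bddAbove
      rintro x ⟨S, _, rfl⟩; exact ⟨S, rfl⟩
    have hbdd2 : BddAbove {x : ℝ | ∃ S : Finset (Fin ntil), S.card = ktil ∧ score Atil S = x} := by
      refine BddAbove.mono ?_ (Set.finite_range (score Atil)).bddAbove
      rintro x ⟨S, _, rfl⟩; exact ⟨S, rfl⟩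
    obtain ⟨S0, _, hS0⟩ := Finset.exists_subset_card_eq
      (show k ≤ (univ : Finset (Fin n)).card by simpa using h2.le)
    have hopt1 : 0 ≤ optScore k A :=
      le_trans (score_nonneg hA.1 S0) (le_csSup hbdd1 ⟨S0, hS0, rfl⟩)
    obtain ⟨S1, _, hS1⟩ := Finset.exists_subset_card_eq
      (show ktil ≤ (univ : Finset (Fin ntil)).card by
        simpa using le_trans h1 (le_trans h2.le h3))
    have hopt2 : 0 ≤ optScore ktil Atil :=
      le_trans (score_nonneg hAtilv.1 S1) (le_csSup hbdd2 ⟨S1, hS1, rfl⟩)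
    have hfrac : 0 ≤ (ktil : ℝ) / (k : ℝ) := by positivity
    by_cases hα : 0 ≤ αtil
    · -- key comparison of opt scores
      have hkey : ∀ S : Finset (Fin n), S.card = k →
          ((ktil : ℝ) / (k : ℝ)) * score A S ≤ optScore ktil Atil := by
        intro S hS
        obtain ⟨T, _, hTcard, hTle⟩ := avg_subset A hA.1 S hS h1
        have hTscore : score A T = score Atil (T.map (Fin.castLEEmb h3)) := by
          rw [hAtil, score_padM h3 A, pull_map]
        refine le_trans hTle ?_
        rw [show (∑ i : Fin n, ∑ j ∈ T, A i j) = score A T from rfl, hTscore]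
        exact le_csSup hbdd2 ⟨T.map (Fin.castLEEmb h3), by simpa using hTcard, rfl⟩
      have hcomp : ((ktil : ℝ) / (k : ℝ)) * optScore k A ≤ optScore ktil Atil := by
        rcases eq_or_lt_of_le hfrac with hz | hpos
        · rw [← hz]; simpa using hopt2
        · have hle : optScore k A ≤ optScore ktil Atil / ((ktil : ℝ) / (k : ℝ)) := by
            refine csSup_le ⟨score A S0, S0, hS0, rfl⟩ ?_
            rintro x ⟨S, hS, rfl⟩
            rw [le_div_iff₀ hpos, mul_comm]
            exact hkey S hS
          calc ((ktil : ℝ) / (k : ℝ)) * optScore k A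
              ≤ ((ktil : ℝ) / (k : ℝ)) * (optScore ktil Atil / ((ktil : ℝ) / (k : ℝ))) :=
                mul_le_mul_of_nonneg_left hle hfrac
            _ = optScore ktil Atil := by
                rw [mul_comm, div_mul_cancel₀ _ (ne_of_gt hpos)]
      calc ((ktil : ℝ) / (k : ℝ)) * αtil * optScore k A
          = αtil * (((ktil : ℝ) / (k : ℝ)) * optScore k A) := by ring
        _ ≤ αtil * optScore ktil Atil := mul_le_mul_of_nonneg_left hcomp hα
        _ ≤ score Atil (g Atil) := hgopt Atil hAtilv
        _ = score A (pullS h3 (g Atil)) := hsc.symm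
    · push_neg at hα
      refine le_trans ?_ hscore_nonneg
      have : ((ktil : ℝ) / (k : ℝ)) * αtil ≤ 0 :=
        mul_nonpos_of_nonneg_of_nonpos hfrac hα.le
      exact mul_nonpos_of_nonpos_of_nonneg this hopt1
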